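/- On a Kähler manifold, for any (p,q)-form φ one has the pointwise identity |T_φ|² = 2(q+1)(n−p)|φ|² − 2⟨ΛLφ, φ⟩, where T_φ ∈ Sym²T^{1,0}M ⊗ Λ^{p+1,q−1}T*M is defined by T_φ(α, β) = ι_{β♯}(α ∧ φ) + ι_{α♯}(β ∧ φ) for (1,0)-forms α, β (with ♯ the metric duality to (0,1)-vectors). -/

import Mathlib

/-- pointwise Kähler linear algebra: on the space `V` of forms on a
Hermitian vector space of complex dimension `n` (with bigrading `P a b`, wedge operators
`w i = dz^i ∧ ·`, `bw i = dz̄^i ∧ ·`, contractions `c i = ι_{∂_i}`, `cbar i = ι_{∂_ī}` in a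
unitary frame, Lefschetz operator `L` and adjoint `Lam`), for any `(p,q)`-form `φ` the
squared norm of the tensor `T_φ = ∑_{i,j} (∂_i⊗∂_j + ∂_j⊗∂_i) ⊗ ι_{∂_ī}(dz^j ∧ φ)`,
namely `|T_φ|² = 2 ∑_{i,j} (⟨ψ_{ij}, ψ_{ij}⟩ + ⟨ψ_{ij}, ψ_{ji}⟩)` with
`ψ_{ij} = ι_{∂_ī}(dz^j ∧ φ)`, equals `2(q+1)(n−p)|φ|² − 2⟨ΛLφ, φ⟩`. -/
theorem stmt_12 (n p q : ℕ)
    (V : Type*) [NormedAddCommGroup V] [InnerProductSpace ℂ V]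
    (P : ℤ → ℤ → Submodule ℂ V)
    (L Lam : Module.End ℂ V) (w bw c cbar : Fin n → Module.End ℂ V)
    (hw : ∀ i (a b : ℤ), ∀ x ∈ P a b, w i x ∈ P (a + 1) b)
    (hbw : ∀ i (a b : ℤ), ∀ x ∈ P a b, bw i x ∈ P a (b + 1))
    (hc : ∀ i (a b : ℤ), ∀ x ∈ P a b, c i x ∈ P (a - 1) b)
    (hcbar : ∀ i (a b : ℤ), ∀ x ∈ P a b, cbar i x ∈ P a (b - 1))
    (hadj1 : ∀ i (x y : V), (inner ℂ (c i x) y : ℂ) = inner ℂ x (w i y))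
    (hadj2 : ∀ i (x y : V), (inner ℂ (cbar i x) y : ℂ) = inner ℂ x (bw i y))
    (hadjL : ∀ x y : V, (inner ℂ (L x) y : ℂ) = inner ℂ x (Lam y))
    (hccr1 : ∀ i j (x : V), c i (w j x) + w j (c i x) = if i = j then x else 0)
    (hccr2 : ∀ i j (x : V), cbar i (bw j x) + bw j (cbar i x) = if i = j then x else 0)
    (hccr3 : ∀ i j (x : V), c i (bw j x) + bw j (c i x) = 0)
    (hccr4 : ∀ i j (x : V), cbar i (w j x) + w j (cbar i x) = 0)
    (hLdef : ∀ x : V, L x = Complex.I • ∑ i, w i (bw i x))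
    (hcount1 : ∀ (a b : ℤ), ∀ x ∈ P a b, ∑ i, w i (c i x) = (a : ℂ) • x)
    (hcount2 : ∀ (a b : ℤ), ∀ x ∈ P a b, ∑ i, bw i (cbar i x) = (b : ℂ) • x)
    (φ : V) (hφ : φ ∈ P p q) :
    2 * ∑ i, ∑ j, ((inner ℂ (cbar i (w j φ)) (cbar i (w j φ)) : ℂ)
        + (inner ℂ (cbar i (w j φ)) (cbar j (w i φ)) : ℂ))
      = 2 * ((q : ℂ) + 1) * ((n : ℂ) - p) * ((‖φ‖ : ℂ)) ^ 2
        - 2 * (inner ℂ (Lam (L φ)) φ : ℂ) := by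
  classical
  -- reversed adjoint identities
  have adj1' : ∀ i (x y : V), (inner ℂ (w i x) y : ℂ) = inner ℂ x (c i y) := by
    intro i x y
    calc (inner ℂ (w i x) y : ℂ) = (starRingEnd ℂ) (inner ℂ y (w i x) : ℂ) := (inner_conj_symm _ _).symm
      _ = (starRingEnd ℂ) (inner ℂ (c i y) x : ℂ) := by rw [hadj1]
      _ = inner ℂ x (c i y) := inner_conj_symm _ _
  have adj2' : ∀ i (x y : V), (inner ℂ (bw i x) y : ℂ) = inner ℂ x (cbar i y) := by
    intro i x y
    calc (inner ℂ (bw i x) y : ℂ) = (starRingEnd ℂ) (inner ℂ y (bw i x) : ℂ) := (inner_conj_symm _ _).symm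
      _ = (starRingEnd ℂ) (inner ℂ (cbar i y) x : ℂ) := by rw [hadj2]
      _ = inner ℂ x (cbar i y) := inner_conj_symm _ _
  -- the anticommutator operators
  set M : Module.End ℂ V := ∑ i, (w i * bw i + bw i * w i) with hMdef
  set G : Module.End ℂ V := ∑ i, (c i * cbar i + cbar i * c i) with hGdef
  have hMapp : ∀ x : V, M x = ∑ i, (w i (bw i x) + bw i (w i x)) := by
    intro x
    rw [hMdef]
    simp [LinearMap.sum_apply, LinearMap.add_apply, Module.End.mul_apply]
  have hGapp : ∀ x : V, G x = ∑ i, (c i (cbar i x) + cbar i (c i x)) := by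
    intro x
    rw [hGdef]
    simp [LinearMap.sum_apply, LinearMap.add_apply, Module.End.mul_apply]
  -- M commutes with all contractions
  have hMc : ∀ k (x : V), c k (M x) = M (c k x) := by
    intro k x
    rw [hMapp, hMapp, map_sum]
    refine Finset.sum_congr rfl fun i _ => ?_
    rw [map_add]
    have h3 : ∀ y : V, c k (bw i y) = - bw i (c k y) := fun y =>
      eq_neg_of_add_eq_zero_left (hccr3 k i y)
    have h1 : ∀ y : V, c k (w i y) = (if k = i then y else 0) - w i (c k y) := fun y =>
      eq_sub_of_add_eq (hccr1 k i y)
    have e1 : c k (w i (bw i x)) = (if k = i then bw i x else 0) + w i (bw i (c k x)) := by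
      rw [h1 (bw i x), h3 x, map_neg, sub_neg_eq_add]
    have e2 : c k (bw i (w i x)) = -(if k = i then bw i x else 0) + bw i (w i (c k x)) := by
      rw [h3 (w i x), h1 x, map_sub]
      have : bw i (if k = i then x else 0) = (if k = i then bw i x else 0) := by
        split <;> simp
      rw [this]
      abel
    rw [e1, e2]
    abel
  have hMcbar : ∀ k (x : V), cbar k (M x) = M (cbar k x) := by
    intro k x
    rw [hMapp, hMapp, map_sum]
    refine Finset.sum_congr rfl fun i _ => ?_
    rw [map_add]
    have h4 : ∀ y : V, cbar k (w i y) = - w i (cbar k y) := fun y =>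
      eq_neg_of_add_eq_zero_left (hccr4 k i y)
    have h2 : ∀ y : V, cbar k (bw i y) = (if k = i then y else 0) - bw i (cbar k y) := fun y =>
      eq_sub_of_add_eq (hccr2 k i y)
    have e1 : cbar k (w i (bw i x)) = -(if k = i then w i x else 0) + w i (bw i (cbar k x)) := by
      rw [h4 (bw i x), h2 x, map_sub]
      have : w i (if k = i then x else 0) = (if k = i then w i x else 0) := by
        split <;> simp
      rw [this]
      abel
    have e2 : cbar k (bw i (w i x)) = (if k = i then w i x else 0) + bw i (w i (cbar k x)) := by
      rw [h2 (w i x), h4 x, map_neg, sub_neg_eq_add]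
    rw [e1, e2]
    abel
  -- G is the adjoint of M
  have hMGadj : ∀ x y : V, (inner ℂ (M x) y : ℂ) = inner ℂ x (G y) := by
    intro x y
    rw [hMapp, hGapp, sum_inner, inner_sum]
    refine Finset.sum_congr rfl fun i _ => ?_
    rw [inner_add_left, inner_add_right]
    have t1 : (inner ℂ (w i (bw i x)) y : ℂ) = inner ℂ x (cbar i (c i y)) := by
      rw [adj1' i (bw i x) y, adj2' i x (c i y)]
    have t2 : (inner ℂ (bw i (w i x)) y : ℂ) = inner ℂ x (c i (cbar i y)) := by
      rw [adj2' i (w i x) y, adj1' i x (cbar i y)]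
    rw [t1, t2]
    ring
  -- pieces with negative holomorphic degree vanish
  have hzero : ∀ (a b : ℤ), a < 0 → ∀ x ∈ P a b, x = 0 := by
    intro a b ha x hx
    have h1 : ∑ i, (inner ℂ (c i x) (c i x) : ℂ) = (a : ℂ) * inner ℂ x x := by
      calc ∑ i, (inner ℂ (c i x) (c i x) : ℂ)
          = ∑ i, (inner ℂ x (w i (c i x)) : ℂ) :=
            Finset.sum_congr rfl fun i _ => hadj1 i x (c i x)
        _ = inner ℂ x (∑ i, w i (c i x)) := (inner_sum _ _ _).symm
        _ = inner ℂ x ((a : ℂ) • x) := by rw [hcount1 a b x hx]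
        _ = (a : ℂ) * inner ℂ x x := inner_smul_right _ _ _
    have h2 : (∑ i, ((‖c i x‖ : ℂ)) ^ 2) = (a : ℂ) * ((‖x‖ : ℂ)) ^ 2 := by
      simpa [inner_self_eq_norm_sq_to_K] using h1
    have h3 : (∑ i, ‖c i x‖ ^ 2 : ℝ) = (a : ℝ) * ‖x‖ ^ 2 := by exact_mod_cast h2
    have h4 : (0 : ℝ) ≤ ∑ i, ‖c i x‖ ^ 2 := Finset.sum_nonneg fun i _ => sq_nonneg _
    have h5 : (a : ℝ) < 0 := by exact_mod_cast ha
    have h6 : ‖x‖ ^ 2 = 0 := by nlinarith [sq_nonneg ‖x‖]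
    exact norm_eq_zero.mp (pow_eq_zero_iff two_ne_zero |>.mp h6)
  -- key: M vanishes on every graded piece
  have hM0 : ∀ (a b : ℤ), ∀ x ∈ P a b, M x = 0 := by
    have key : ∀ k : ℕ, ∀ (a b : ℤ), a < k → ∀ x ∈ P a b, M x = 0 := by
      intro k
      induction k with
      | zero =>
        intro a b ha x hx
        rw [hzero a b (by exact_mod_cast ha) x hx, map_zero]
      | succ k ih =>
        intro a b ha x hx
        have hGx : G x ∈ P (a - 1) (b - 1) := by
          rw [hGapp]
          refine Submodule.sum_mem _ fun i _ => Submodule.add_mem _ ?_ ?_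
          · exact hc i a (b - 1) _ (hcbar i a b x hx)
          · exact hcbar i (a - 1) b _ (hc i a b x hx)
        have h1 : M (G x) = 0 := by
          refine ih (a - 1) (b - 1) ?_ _ hGx
          push_cast at ha ⊢
          omega
        have hcomm : G (M x) = M (G x) := by
          rw [hGapp, hGapp, map_sum]
          refine Finset.sum_congr rfl fun i _ => ?_
          rw [hMcbar i x, hMc i x, hMc i (cbar i x), hMcbar i (c i x), ← map_add]
        have h2 : (inner ℂ (M x) (M x) : ℂ) = 0 := by
          rw [hMGadj, hcomm, h1, inner_zero_right]
        exact inner_self_eq_zero.mp h2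
    intro a b x hx
    exact key (a.toNat + 1) a b (by omega) x hx
  -- norm of ∑ w i φ
  have hsum_w : ∑ j, (inner ℂ (w j φ) (w j φ) : ℂ) = ((n : ℂ) - p) * inner ℂ φ φ := by
    have hcw : ∑ j, c j (w j φ) = ((n : ℂ) - p) • φ := by
      have h1 : ∀ j : Fin n, c j (w j φ) = φ - w j (c j φ) := by
        intro j
        have h := hccr1 j j φ
        rw [if_pos rfl] at h
        exact eq_sub_of_add_eq h
      calc ∑ j, c j (w j φ) = ∑ _j : Fin n, φ - ∑ j, w j (c j φ) := by
            rw [← Finset.sum_sub_distrib]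
            exact Finset.sum_congr rfl fun j _ => h1 j
        _ = ((n : ℂ) - p) • φ := by
            rw [Finset.sum_const, Finset.card_univ, Fintype.card_fin, hcount1 p q φ hφ,
              sub_smul, ← Nat.cast_smul_eq_nsmul ℂ]
            norm_cast
    calc ∑ j, (inner ℂ (w j φ) (w j φ) : ℂ)
        = ∑ j, (inner ℂ (c j (w j φ)) φ : ℂ) :=
          Finset.sum_congr rfl fun j _ => (hadj1 j (w j φ) φ).symm
      _ = inner ℂ (∑ j, c j (w j φ)) φ := (sum_inner _ _ _).symm
      _ = ((n : ℂ) - p) * inner ℂ φ φ := by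
          rw [hcw, inner_smul_left]
          congr 1
          simp [map_sub]
  -- the diagonal sum A
  have h_A : ∑ i, ∑ j, (inner ℂ (cbar i (w j φ)) (cbar i (w j φ)) : ℂ)
      = (q : ℂ) * (((n : ℂ) - p) * inner ℂ φ φ) := by
    rw [Finset.sum_comm]
    calc ∑ j, ∑ i, (inner ℂ (cbar i (w j φ)) (cbar i (w j φ)) : ℂ)
        = ∑ j, (q : ℂ) * inner ℂ (w j φ) (w j φ) := by
          refine Finset.sum_congr rfl fun j _ => ?_
          calc ∑ i, (inner ℂ (cbar i (w j φ)) (cbar i (w j φ)) : ℂ)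
              = ∑ i, (inner ℂ (w j φ) (bw i (cbar i (w j φ))) : ℂ) :=
                Finset.sum_congr rfl fun i _ => hadj2 i (w j φ) (cbar i (w j φ))
            _ = inner ℂ (w j φ) (∑ i, bw i (cbar i (w j φ))) := (inner_sum _ _ _).symm
            _ = inner ℂ (w j φ) ((q : ℂ) • (w j φ)) := by
                have h := hcount2 (p + 1) q (w j φ) (hw j p q φ hφ)
                rw [h]
                norm_cast
            _ = (q : ℂ) * inner ℂ (w j φ) (w j φ) := inner_smul_right _ _ _
      _ = (q : ℂ) * (((n : ℂ) - p) * inner ℂ φ φ) := by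
          rw [← Finset.mul_sum, hsum_w]
  -- the off-diagonal sum D and the Lefschetz term
  set D := ∑ i, ∑ j, (inner ℂ (cbar i (w j φ)) (cbar j (w i φ)) : ℂ) with hDdef
  have hLL : (inner ℂ (Lam (L φ)) φ : ℂ) = inner ℂ (L φ) (L φ) := by
    calc (inner ℂ (Lam (L φ)) φ : ℂ) = (starRingEnd ℂ) (inner ℂ φ (Lam (L φ)) : ℂ) :=
          (inner_conj_symm _ _).symm
      _ = (starRingEnd ℂ) (inner ℂ (L φ) (L φ) : ℂ) := by rw [← hadjL]
      _ = inner ℂ (L φ) (L φ) := inner_conj_symm _ _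
  have hMφ : ∑ i, (w i (bw i φ) + bw i (w i φ)) = 0 := by
    have h := hM0 p q φ hφ
    rw [hMapp] at h
    exact h
  have hneg : ∑ i, w i (bw i φ) = - ∑ i, bw i (w i φ) := by
    rw [Finset.sum_add_distrib] at hMφ
    exact eq_neg_of_add_eq_zero_left hMφ
  set v := ∑ i, bw i (w i φ) with hvdef
  have hLL2 : (inner ℂ (L φ) (L φ) : ℂ) = inner ℂ v v := by
    rw [hLdef φ, hneg, inner_smul_left, inner_smul_right, inner_neg_neg, ← mul_assoc,
      Complex.conj_I]
    simp [Complex.I_mul_I]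
  have hRR : (inner ℂ v v : ℂ) = ((n : ℂ) - p) * inner ℂ φ φ - D := by
    have step1 : (inner ℂ v v : ℂ) = ∑ i, ∑ j, (inner ℂ (w i φ) (cbar i (bw j (w j φ))) : ℂ) := by
      calc (inner ℂ v v : ℂ) = ∑ i, (inner ℂ (bw i (w i φ)) v : ℂ) := by
            rw [hvdef, sum_inner]
        _ = ∑ i, (inner ℂ (w i φ) (cbar i v) : ℂ) :=
            Finset.sum_congr rfl fun i _ => adj2' i (w i φ) v
        _ = ∑ i, ∑ j, (inner ℂ (w i φ) (cbar i (bw j (w j φ))) : ℂ) := by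
            refine Finset.sum_congr rfl fun i _ => ?_
            rw [hvdef, map_sum, inner_sum]
    have step2 : ∀ i j : Fin n,
        (inner ℂ (w i φ) (cbar i (bw j (w j φ))) : ℂ)
          = (if i = j then (inner ℂ (w i φ) (w j φ) : ℂ) else 0)
            - (inner ℂ (cbar j (w i φ)) (cbar i (w j φ)) : ℂ) := by
      intro i j
      have h2 : cbar i (bw j (w j φ)) = (if i = j then w j φ else 0) - bw j (cbar i (w j φ)) :=
        eq_sub_of_add_eq (hccr2 i j (w j φ))
      rw [h2, inner_sub_right]
      congr 1
      · split <;> simp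
      · exact (hadj2 j (w i φ) (cbar i (w j φ))).symm
    rw [step1]
    have : ∑ i, ∑ j, (inner ℂ (w i φ) (cbar i (bw j (w j φ))) : ℂ)
        = (∑ i, ∑ j, (if i = j then (inner ℂ (w i φ) (w j φ) : ℂ) else 0))
          - ∑ i, ∑ j, (inner ℂ (cbar j (w i φ)) (cbar i (w j φ)) : ℂ) := by
      rw [← Finset.sum_sub_distrib]
      refine Finset.sum_congr rfl fun i _ => ?_
      rw [← Finset.sum_sub_distrib]
      exact Finset.sum_congr rfl fun j _ => step2 i j
    rw [this]
    congr 1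
    · calc ∑ i, ∑ j, (if i = j then (inner ℂ (w i φ) (w j φ) : ℂ) else 0)
          = ∑ i, (inner ℂ (w i φ) (w i φ) : ℂ) := by
            refine Finset.sum_congr rfl fun i _ => ?_
            simp
        _ = ((n : ℂ) - p) * inner ℂ φ φ := hsum_w
    · rw [hDdef]
      exact Finset.sum_comm
  have hLam : (inner ℂ (Lam (L φ)) φ : ℂ) = ((n : ℂ) - p) * inner ℂ φ φ - D := by
    rw [hLL, hLL2, hRR]
  -- put everything together
  have hsplit : ∑ i, ∑ j, ((inner ℂ (cbar i (w j φ)) (cbar i (w j φ)) : ℂ)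
        + (inner ℂ (cbar i (w j φ)) (cbar j (w i φ)) : ℂ))
      = (q : ℂ) * (((n : ℂ) - p) * inner ℂ φ φ) + D := by
    rw [← h_A, hDdef, ← Finset.sum_add_distrib]
    refine Finset.sum_congr rfl fun i _ => ?_
    rw [← Finset.sum_add_distrib]
  have hns : (inner ℂ φ φ : ℂ) = ((‖φ‖ : ℂ)) ^ 2 := inner_self_eq_norm_sq_to_K φ
  rw [hsplit, hLam, hns]
  ring
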